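/- Assume k ≥ 2. Every vector (x_K, x_S) ∈ ℝᵏ × ℝˢ in the nullspace of A has x_K = 0 if and only if the clique-kernel ck(Sp) = ker(Rᵀ) ∩ range((I − J)⁻¹·R) is the zero subspace. -/

import Mathlib

open Matrix

/-- For `k ≥ 2`, every kernel vector `(x_K, x_S)` of `A` has
`x_K = 0` iff the clique-kernel `ck(Sp) = ker(Rᵀ) ∩ range((I - J)⁻¹ R)` is the
zero subspace. -/
theorem stmt_6 (k s : ℕ) (hk : 2 ≤ k)
    (R : Matrix (Fin k) (Fin s) ℝ) (hR01 : ∀ i j, R i j = 0 ∨ R i j = 1)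
    (J : Matrix (Fin k) (Fin k) ℝ) (hJ : ∀ i j, J i j = 1)
    (A : Matrix (Fin k ⊕ Fin s) (Fin k ⊕ Fin s) ℝ)
    (hA : A = Matrix.fromBlocks (J - 1) R Rᵀ 0) :
    (∀ (xK : Fin k → ℝ) (xS : Fin s → ℝ),
        A.mulVec (Sum.elim xK xS) = 0 → xK = 0) ↔
      LinearMap.ker (Matrix.mulVecLin Rᵀ) ⊓
        LinearMap.range (Matrix.mulVecLin ((1 - J)⁻¹ * R)) = ⊥ := by
  subst hA
  have hk1 : (k : ℝ) - 1 ≠ 0 := by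
    have : (2 : ℝ) ≤ (k : ℝ) := by exact_mod_cast hk
    intro h; linarith
  set c : ℝ := ((k : ℝ) - 1)⁻¹ with hc_def
  have hJJ : J * J = (k : ℝ) • J := by
    ext i j
    simp [Matrix.mul_apply, hJ, Finset.sum_const]
  have hc : c * (k : ℝ) = c + 1 := by
    rw [hc_def]; field_simp; ring
  have hmul : (1 - J) * (1 - c • J) = 1 := by
    rw [mul_sub, mul_one, sub_mul, one_mul, mul_smul_comm, hJJ,
      smul_smul, hc, add_smul, one_smul]
    abel
  have hmul2 : (1 - c • J) * (1 - J) = 1 := by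
    rw [mul_eq_one_comm]; exact hmul
  have hBA : (1 - J)⁻¹ * (1 - J) = 1 := by
    rw [Matrix.inv_eq_right_inv hmul]; exact hmul2
  have hAB : (1 - J) * (1 - J)⁻¹ = 1 := by
    rw [Matrix.inv_eq_right_inv hmul]; exact hmul
  constructor
  · intro h
    rw [Submodule.eq_bot_iff]
    rintro x ⟨hx1, y, hy⟩
    simp only [Matrix.mulVecLin_apply] at hy
    have hx1' : Rᵀ *ᵥ x = 0 := hx1
    apply h x y
    rw [Matrix.fromBlocks_mulVec]
    have hx : x = (1 - J)⁻¹.mulVec (R.mulVec y) := by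
      rw [← hy, ← Matrix.mulVec_mulVec]
    have htop : (J - 1).mulVec x + R.mulVec y = 0 := by
      have : (1 - J).mulVec x = R.mulVec y := by
        rw [hx, Matrix.mulVec_mulVec, hAB, Matrix.one_mulVec]
      have hneg : (J - 1).mulVec x = -(R.mulVec y) := by
        rw [← this, ← Matrix.neg_mulVec, neg_sub]
      rw [hneg]; abel
    funext z
    cases z with
    | inl i =>
      have := congrFun htop i
      simpa using this
    | inr i =>
      have := congrFun hx1' i
      simpa using this
  · intro h xK xS hker
    rw [Matrix.fromBlocks_mulVec] at hker
    have htop : (J - 1).mulVec xK + R.mulVec xS = 0 := by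
      funext i; exact congrFun hker (Sum.inl i)
    have hbot : Rᵀ.mulVec xK = 0 := by
      funext i
      have := congrFun hker (Sum.inr i)
      simpa using this
    have hx : xK = ((1 - J)⁻¹ * R).mulVec xS := by
      have h1 : (1 - J).mulVec xK = R.mulVec xS := by
        have : (J - 1).mulVec xK = -(R.mulVec xS) := by
          rw [eq_neg_iff_add_eq_zero]; exact htop
        rw [← neg_neg ((1 - J).mulVec xK), ← Matrix.neg_mulVec, neg_sub, this, neg_neg]
      rw [← Matrix.mulVec_mulVec, ← h1, Matrix.mulVec_mulVec, hBA, Matrix.one_mulVec]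
    have : xK ∈ LinearMap.ker (Matrix.mulVecLin Rᵀ) ⊓
        LinearMap.range (Matrix.mulVecLin ((1 - J)⁻¹ * R)) := by
      refine ⟨LinearMap.mem_ker.mpr ?_, ⟨xS, ?_⟩⟩
      · show Rᵀ *ᵥ xK = 0
        exact hbot
      · show ((1 - J)⁻¹ * R) *ᵥ xS = xK
        exact hx.symm
    rw [h] at this
    simpa using this
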